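/- Location of the first edge singular exponent: let a ∈ (0, π) and let c > 1. Then (i) for every t ∈ (0, 1/2] one has sin(t(π − a)) < c · sin(tπ), so the equation sin(μ(π − a)) = c · sin(μπ) has no solution μ ∈ (0, 1/2]; and (ii) there exists μ ∈ (1/2, 1) with sin(μ(π − a)) = c · sin(μπ). In particular, the smallest positive solution μ₁ of this equation in (0,1) satisfies 1/2 < μ₁ < 1. -/
import Mathlib


open Real Set

/-- Location of the first edge singular exponent: for an opening angle `a ∈ (0, π)` and
contrast ratio `c > 1`, the equation `sin (μ(π−a)) = c · sin (μπ)` has no solution in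
`(0, 1/2]`, has a solution in `(1/2, 1)`, and its least positive solution lies in `(1/2, 1)`. -/
theorem first_edge_singular_exponent (a c : ℝ) (ha : a ∈ Set.Ioo 0 π) (hc : 1 < c) :
    (∀ t ∈ Set.Ioc (0 : ℝ) (1 / 2),
        Real.sin (t * (π - a)) < c * Real.sin (t * π)) ∧
    (∃ μ ∈ Set.Ioo (1 / 2 : ℝ) 1,
        Real.sin (μ * (π - a)) = c * Real.sin (μ * π)) ∧
    (∀ μ₁ : ℝ,
        IsLeast {μ : ℝ | 0 < μ ∧ Real.sin (μ * (π - a)) = c * Real.sin (μ * π)} μ₁ →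
        μ₁ ∈ Set.Ioo (1 / 2 : ℝ) 1) := by
  obtain ⟨ha0, haπ⟩ := ha
  have hπ := Real.pi_pos
  -- Part (i)
  have part1 : ∀ t ∈ Set.Ioc (0 : ℝ) (1 / 2),
      Real.sin (t * (π - a)) < c * Real.sin (t * π) := by
    intro t ⟨ht0, ht2⟩
    have h1 : t * (π - a) < t * π := by nlinarith
    have h2 : t * π ≤ π / 2 := by nlinarith
    have h3 : 0 < t * π := by positivity
    have h4 : 0 ≤ t * (π - a) := by nlinarith
    have hsin1 : Real.sin (t * (π - a)) < Real.sin (t * π) :=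
      Real.strictMonoOn_sin ⟨by linarith, by linarith⟩ ⟨by linarith, by linarith⟩ h1
    have hsin2 : 0 < Real.sin (t * π) :=
      Real.sin_pos_of_pos_of_lt_pi h3 (by linarith)
    nlinarith
  -- Part (ii)
  have part2 : ∃ μ ∈ Set.Ioo (1 / 2 : ℝ) 1,
      Real.sin (μ * (π - a)) = c * Real.sin (μ * π) := by
    set f : ℝ → ℝ := fun μ => Real.sin (μ * (π - a)) - c * Real.sin (μ * π) with hf
    have hcont : ContinuousOn f (Set.Icc (1 / 2 : ℝ) 1) := by
      apply Continuous.continuousOn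
      fun_prop
    have hfa : f (1 / 2) < 0 := by
      have h1 : Real.sin (1 / 2 * (π - a)) ≤ 1 := Real.sin_le_one _
      have h2 : Real.sin (1 / 2 * π) = 1 := by
        rw [show (1 / 2 : ℝ) * π = π / 2 by ring, Real.sin_pi_div_two]
      simp only [hf]
      rw [h2]
      linarith
    have hfb : 0 < f 1 := by
      simp only [hf, one_mul, Real.sin_pi, mul_zero, sub_zero]
      rw [show π - a = π - a from rfl]
      have : Real.sin (π - a) = Real.sin a := Real.sin_pi_sub a
      rw [this]
      exact Real.sin_pos_of_pos_of_lt_pi ha0 haπ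
    have h0 : (0 : ℝ) ∈ Set.Ioo (f (1 / 2)) (f 1) := ⟨hfa, hfb⟩
    have := intermediate_value_Ioo (by norm_num : (1/2:ℝ) ≤ 1) hcont h0
    obtain ⟨μ, hμ, hμ0⟩ := this
    exact ⟨μ, hμ, by simpa [hf, sub_eq_zero] using hμ0⟩
  refine ⟨part1, part2, ?_⟩
  -- Part (iii)
  rintro μ₁ ⟨⟨hμ₁pos, hμ₁eq⟩, hlb⟩
  obtain ⟨μ, ⟨hμl, hμr⟩, hμeq⟩ := part2
  have hle : μ₁ ≤ μ := hlb ⟨by linarith, hμeq⟩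
  constructor
  · by_contra h
    push_neg at h
    exact absurd hμ₁eq (ne_of_lt (part1 μ₁ ⟨hμ₁pos, h⟩))
  · linarith
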